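/- Let λ₁, λ₂ > 0 and c > 0, and let R₁, R₂ be as in the context. Then ℙ(R₁ < c R₂) = 1 − (λ₂/(c √λ₁)) · exp( λ₂²/(π λ₁ c²) ) · erfc( λ₂/(c √(π λ₁)) ). -/

import Mathlib

open MeasureTheory Real ProbabilityTheory
open Set

/-- The complementary error function `erfc(x) = (2/√π) ∫_x^∞ e^{−t²} dt`. -/
noncomputable def erfc (x : ℝ) : ℝ :=
  (2 / Real.sqrt π) * ∫ t in Set.Ioi x, Real.exp (-t ^ 2)


lemma integral_Ioi_exp_neg_sq (x : ℝ) :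
    ∫ t in Set.Ioi x, Real.exp (-t ^ 2) = Real.sqrt π / 2 * erfc x := by
  have h : Real.sqrt π ≠ 0 := by positivity
  rw [erfc]
  field_simp

lemma integral_Ioi_comp_add_right (f : ℝ → ℝ) (a d : ℝ) :
    (∫ t in Set.Ioi a, f (t + d)) = ∫ u in Set.Ioi (a + d), f u := by
  have hemb : MeasurableEmbedding (fun x : ℝ => x + d) :=
    (MeasurableEquiv.addRight d).measurableEmbedding
  have h := hemb.setIntegral_map (μ := (volume : Measure ℝ)) f (Set.Ioi (a + d))
  rw [map_add_right_eq_self (volume : Measure ℝ) d] at h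
  rw [h, preimage_add_const_Ioi, add_sub_cancel_right]

lemma integral_aux {a b : ℝ} (ha : 0 < a) (hb : 0 < b) :
    (∫ t in Set.Ioi (0:ℝ), a * Real.exp (-(a * t + b * t ^ 2)))
      = a * Real.sqrt π / (2 * Real.sqrt b) * Real.exp (a ^ 2 / (4 * b)) *
        erfc (a / (2 * Real.sqrt b)) := by
  have hsb : (0:ℝ) < Real.sqrt b := Real.sqrt_pos.mpr hb
  have hbsq : Real.sqrt b * Real.sqrt b = b := Real.mul_self_sqrt hb.le
  set d : ℝ := a / (2 * b) with hd
  have key : ∀ t : ℝ, a * Real.exp (-(a * t + b * t ^ 2))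
      = (a * Real.exp (a ^ 2 / (4 * b))) * Real.exp (-(Real.sqrt b * (t + d)) ^ 2) := by
    intro t
    rw [mul_assoc, ← Real.exp_add]
    congr 2
    have h1 : (Real.sqrt b * (t + d)) ^ 2 = b * (t + d) ^ 2 := by
      rw [mul_pow, sq (Real.sqrt b), hbsq]
    rw [h1, hd]
    field_simp
    ring
  rw [setIntegral_congr_fun measurableSet_Ioi fun t _ => key t, integral_const_mul]
  have hshift : (∫ t in Set.Ioi (0:ℝ), Real.exp (-(Real.sqrt b * (t + d)) ^ 2))
      = ∫ u in Set.Ioi d, Real.exp (-(Real.sqrt b * u) ^ 2) := by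
    rw [integral_Ioi_comp_add_right (fun u => Real.exp (-(Real.sqrt b * u) ^ 2)) 0 d, zero_add]
  rw [hshift]
  have hscale : (∫ u in Set.Ioi d, Real.exp (-(Real.sqrt b * u) ^ 2))
      = (Real.sqrt b)⁻¹ * ∫ s in Set.Ioi (Real.sqrt b * d), Real.exp (-s ^ 2) := by
    rw [integral_comp_mul_left_Ioi (fun s => Real.exp (-s ^ 2)) d hsb, smul_eq_mul]
  have harg : Real.sqrt b * d = a / (2 * Real.sqrt b) := by
    rw [hd]
    field_simp
    rw [sq, hbsq]
  rw [hscale, harg, integral_Ioi_exp_neg_sq]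
  field_simp

/-- Association probability with a tier 1 node: if `R₁, R₂` are independent nonnegative random
variables with `ℙ(R₁ > r) = exp(−π λ₁ r²)` and `ℙ(R₂ > r) = exp(−2 λ₂ r)` for `r ≥ 0`, then
`ℙ(R₁ < c R₂) = 1 − (λ₂/(c √λ₁)) e^{λ₂²/(π λ₁ c²)} erfc(λ₂/(c √(π λ₁)))`. -/
theorem prob_assoc_tier_one {Ω : Type*} [MeasurableSpace Ω]
    (P : Measure Ω) [IsProbabilityMeasure P]
    (R₁ R₂ : Ω → ℝ) (hR₁ : Measurable R₁) (hR₂ : Measurable R₂)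
    (hindep : IndepFun R₁ R₂ P)
    (hR₁_nonneg : ∀ ω, 0 ≤ R₁ ω) (hR₂_nonneg : ∀ ω, 0 ≤ R₂ ω)
    (lam₁ lam₂ c : ℝ) (hlam₁ : 0 < lam₁) (hlam₂ : 0 < lam₂) (hc : 0 < c)
    (hsurv₁ : ∀ r : ℝ, 0 ≤ r →
      P {ω | r < R₁ ω} = ENNReal.ofReal (Real.exp (-(π * lam₁ * r ^ 2))))
    (hsurv₂ : ∀ r : ℝ, 0 ≤ r →
      P {ω | r < R₂ ω} = ENNReal.ofReal (Real.exp (-(2 * lam₂ * r)))) :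
    P {ω | R₁ ω < c * R₂ ω}
      = ENNReal.ofReal (1 - (lam₂ / (c * Real.sqrt lam₁)) *
          Real.exp (lam₂ ^ 2 / (π * lam₁ * c ^ 2)) *
          erfc (lam₂ / (c * Real.sqrt (π * lam₁)))) := by
  have hπ : (0:ℝ) < π := Real.pi_pos
  set a2 : ℝ := 2 * lam₂ / c with ha2def
  have ha2 : 0 < a2 := by positivity
  set b : ℝ := π * lam₁ with hbdef
  have hb : 0 < b := by positivity
  set μ₁ : Measure ℝ := P.map R₁ with hμ₁
  set μ₂ : Measure ℝ := P.map R₂ with hμ₂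
  have hpm₁ : IsProbabilityMeasure μ₁ := Measure.isProbabilityMeasure_map hR₁.aemeasurable
  have hpm₂ : IsProbabilityMeasure μ₂ := Measure.isProbabilityMeasure_map hR₂.aemeasurable
  have hae : ∀ᵐ x ∂μ₁, 0 ≤ x := by
    rw [hμ₁, ae_map_iff hR₁.aemeasurable (measurableSet_Ici : MeasurableSet (Set.Ici (0:ℝ)))]
    exact Filter.Eventually.of_forall hR₁_nonneg
  have hμ₁Ioi : ∀ t : ℝ, 0 ≤ t → μ₁ (Set.Ioi t) = ENNReal.ofReal (Real.exp (-(b * t ^ 2))) := by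
    intro t ht
    rw [hμ₁, Measure.map_apply hR₁ measurableSet_Ioi]
    exact hsurv₁ t ht
  have hμ₂Ioi : ∀ t : ℝ, 0 ≤ t → μ₂ (Set.Ioi t) = ENNReal.ofReal (Real.exp (-(2 * lam₂ * t))) := by
    intro t ht
    rw [hμ₂, Measure.map_apply hR₂ measurableSet_Ioi]
    exact hsurv₂ t ht
  -- Step 1: rewrite via the product measure
  have hs : MeasurableSet {p : ℝ × ℝ | p.1 < c * p.2} :=
    measurableSet_lt measurable_fst (measurable_snd.const_mul c)
  have hmap : P.map (fun ω => (R₁ ω, R₂ ω)) = μ₁.prod μ₂ :=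
    (indepFun_iff_map_prod_eq_prod_map_map hR₁.aemeasurable hR₂.aemeasurable).mp hindep
  have hslice : ∀ x : ℝ, (Prod.mk x ⁻¹' {p : ℝ × ℝ | p.1 < c * p.2}) = Set.Ioi (x / c) := by
    intro x
    ext y
    simp only [Set.mem_preimage, Set.mem_setOf_eq, Set.mem_Ioi]
    rw [div_lt_iff₀ hc, mul_comm]
  have h1 : P {ω | R₁ ω < c * R₂ ω} = ∫⁻ x, μ₂ (Set.Ioi (x / c)) ∂μ₁ := by
    have hpre : {ω | R₁ ω < c * R₂ ω}
        = (fun ω => (R₁ ω, R₂ ω)) ⁻¹' {p : ℝ × ℝ | p.1 < c * p.2} := rfl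
    rw [hpre, ← Measure.map_apply (hR₁.prodMk hR₂) hs, hmap, Measure.prod_apply hs]
    simp_rw [hslice]
  -- Step 2: the integrand μ₁-a.e.
  have h2 : ∫⁻ x, μ₂ (Set.Ioi (x / c)) ∂μ₁
      = ∫⁻ x, ENNReal.ofReal (Real.exp (-(a2 * x))) ∂μ₁ := by
    refine lintegral_congr_ae (hae.mono fun x hx => ?_)
    dsimp only
    rw [hμ₂Ioi (x / c) (div_nonneg hx hc.le)]
    congr 2
    rw [ha2def]
    field_simp
  -- exponential integrability
  have hexp_int : IntegrableOn (fun t : ℝ => a2 * Real.exp (-(a2 * t))) (Set.Ioi (0:ℝ)) := by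
    have h := (exp_neg_integrableOn_Ioi 0 ha2).const_mul a2
    simpa [neg_mul, IntegrableOn] using h
  -- real interval computation
  have hexpint : ∀ x : ℝ, 0 ≤ x →
      (∫ t in Set.Ioo (0:ℝ) x, a2 * Real.exp (-(a2 * t))) = 1 - Real.exp (-(a2 * x)) := by
    intro x hx
    rw [← integral_Ioc_eq_integral_Ioo, ← intervalIntegral.integral_of_le hx]
    have hderiv : ∀ t ∈ Set.uIcc (0:ℝ) x,
        HasDerivAt (fun t => -Real.exp (-(a2 * t))) (a2 * Real.exp (-(a2 * t))) t := by
      intro t _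
      have h1 : HasDerivAt (fun t : ℝ => -a2 * t) (-a2) t := by
        simpa using (hasDerivAt_id t).const_mul (-a2)
      have h2 := (h1.exp).neg
      have h3 : (fun t : ℝ => -Real.exp (-a2 * t)) = fun t => -Real.exp (-(a2 * t)) := by
        ext s; rw [neg_mul]
      rw [show (-fun x => Real.exp (-a2 * x)) = fun t : ℝ => -Real.exp (-a2 * t) from rfl, h3] at h2
      refine h2.congr_deriv ?_
      rw [neg_mul]
      ring
    rw [intervalIntegral.integral_eq_sub_of_hasDerivAt hderiv
      (Continuous.intervalIntegrable (by continuity) 0 x)]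
    simp [mul_zero, Real.exp_zero]
    ring
  -- the kernel for Fubini
  set u : ℝ × ℝ → ENNReal := fun q =>
    ({q : ℝ × ℝ | q.2 < q.1}.indicator
      (fun q => ENNReal.ofReal (a2 * Real.exp (-(a2 * q.2))))) q with hu
  have hSmeas : MeasurableSet {q : ℝ × ℝ | q.2 < q.1} :=
    measurableSet_lt measurable_snd measurable_fst
  have humeas : Measurable u := by
    apply Measurable.indicator _ hSmeas
    exact ENNReal.measurable_ofReal.comp
      ((measurable_const.mul ((measurable_snd.const_mul a2).neg.exp)))
  set ν : Measure ℝ := volume.restrict (Set.Ioi (0:ℝ)) with hν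
  -- step (i)
  have hstep : ∀ x : ℝ, 0 ≤ x →
      ENNReal.ofReal (Real.exp (-(a2 * x))) + ∫⁻ t, u (x, t) ∂ν = 1 := by
    intro x hx
    have hind : ∀ t : ℝ, u (x, t)
        = (Set.Iio x).indicator (fun t => ENNReal.ofReal (a2 * Real.exp (-(a2 * t)))) t := by
      intro t
      simp [hu, Set.indicator_apply]
    have h3 : ∫⁻ t, u (x, t) ∂ν = ENNReal.ofReal (1 - Real.exp (-(a2 * x))) := by
      simp_rw [hind]
      rw [hν, lintegral_indicator measurableSet_Iio,
        Measure.restrict_restrict measurableSet_Iio, Set.Iio_inter_Ioi,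
        ← ofReal_integral_eq_lintegral_ofReal
          (hexp_int.mono_set Set.Ioo_subset_Ioi_self)
          (Filter.Eventually.of_forall fun t => by positivity),
        hexpint x hx]
    rw [h3, ← ENNReal.ofReal_add (by positivity)
      (sub_nonneg.mpr (Real.exp_le_one_iff.mpr (neg_nonpos.mpr (by positivity))))]
    norm_num
  -- K + L = 1
  have hK_meas : Measurable fun x : ℝ => ENNReal.ofReal (Real.exp (-(a2 * x))) := by
    exact ENNReal.measurable_ofReal.comp ((measurable_id.const_mul a2).neg.exp)
  have hkey : (∫⁻ x, ENNReal.ofReal (Real.exp (-(a2 * x))) ∂μ₁)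
      + (∫⁻ x, ∫⁻ t, u (x, t) ∂ν ∂μ₁) = 1 := by
    rw [← lintegral_add_left hK_meas]
    have heq : ∫⁻ x, (ENNReal.ofReal (Real.exp (-(a2 * x))) + ∫⁻ t, u (x, t) ∂ν) ∂μ₁
        = ∫⁻ x, 1 ∂μ₁ :=
      lintegral_congr_ae (hae.mono fun x hx => hstep x hx)
    rw [heq, lintegral_one, measure_univ]
  -- Fubini
  have hswap : (∫⁻ x, ∫⁻ t, u (x, t) ∂ν ∂μ₁) = ∫⁻ t, ∫⁻ x, u (x, t) ∂μ₁ ∂ν :=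
    lintegral_lintegral_swap humeas.aemeasurable
  have hInner : ∀ t : ℝ, t ∈ Set.Ioi (0:ℝ) →
      (∫⁻ x, u (x, t) ∂μ₁) = ENNReal.ofReal (a2 * Real.exp (-(a2 * t + b * t ^ 2))) := by
    intro t ht
    have h4 : ∀ x : ℝ, u (x, t)
        = (Set.Ioi t).indicator (fun _ => ENNReal.ofReal (a2 * Real.exp (-(a2 * t)))) x := by
      intro x
      simp [hu, Set.indicator_apply]
    simp_rw [h4]
    rw [lintegral_indicator_const measurableSet_Ioi, hμ₁Ioi t (le_of_lt ht),
      ← ENNReal.ofReal_mul (by positivity)]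
    congr 1
    rw [mul_assoc, ← Real.exp_add]
    congr 2
    ring
  have hIint : IntegrableOn (fun t : ℝ => a2 * Real.exp (-(a2 * t + b * t ^ 2)))
      (Set.Ioi (0:ℝ)) := by
    refine Integrable.mono' hexp_int ?_ (Filter.Eventually.of_forall fun t => ?_)
    · exact ((measurable_const.mul
        (((measurable_id.const_mul a2).add
          ((measurable_id.pow_const 2).const_mul b)).neg.exp))).aestronglyMeasurable
    · rw [Real.norm_eq_abs, abs_of_nonneg (by positivity)]
      refine mul_le_mul_of_nonneg_left ?_ ha2.le
      exact Real.exp_le_exp.mpr (by nlinarith [sq_nonneg t])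
  set I : ℝ := ∫ t in Set.Ioi (0:ℝ), a2 * Real.exp (-(a2 * t + b * t ^ 2)) with hI
  have hL : (∫⁻ t, ∫⁻ x, u (x, t) ∂μ₁ ∂ν) = ENNReal.ofReal I := by
    rw [hν, setLIntegral_congr_fun measurableSet_Ioi hInner,
      ← ofReal_integral_eq_lintegral_ofReal hIint
        (Filter.Eventually.of_forall fun t => by positivity)]
  have hInonneg : 0 ≤ I :=
    setIntegral_nonneg measurableSet_Ioi fun t _ => by positivity
  have hkey' : (∫⁻ x, ENNReal.ofReal (Real.exp (-(a2 * x))) ∂μ₁) + ENNReal.ofReal I = 1 := by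
    rw [← hL, ← hswap]
    exact hkey
  have hKval : (∫⁻ x, ENNReal.ofReal (Real.exp (-(a2 * x))) ∂μ₁) = 1 - ENNReal.ofReal I :=
    ENNReal.eq_sub_of_add_eq ENNReal.ofReal_ne_top hkey'
  have hIval : I = lam₂ / (c * Real.sqrt lam₁) * Real.exp (lam₂ ^ 2 / (b * c ^ 2)) *
      erfc (lam₂ / (c * Real.sqrt b)) := by
    rw [hI, integral_aux ha2 hb]
    have hsπ : Real.sqrt π ≠ 0 := by positivity
    have hsl : Real.sqrt lam₁ ≠ 0 := by positivity
    have hsb' : Real.sqrt b ≠ 0 := by positivity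
    have e1 : a2 / (2 * Real.sqrt b) = lam₂ / (c * Real.sqrt b) := by
      rw [ha2def]; field_simp
    have e2 : a2 ^ 2 / (4 * b) = lam₂ ^ 2 / (b * c ^ 2) := by
      rw [ha2def]; field_simp; ring
    have e3 : a2 * Real.sqrt π / (2 * Real.sqrt b) = lam₂ / (c * Real.sqrt lam₁) := by
      rw [ha2def, hbdef, Real.sqrt_mul hπ.le]
      field_simp
    rw [e1, e2, e3]
  rw [h1, h2, hKval, ← hIval, ← ENNReal.ofReal_one,
    ← ENNReal.ofReal_sub 1 hInonneg]
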